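/- Let Σ be a real symmetric positive semidefinite m×m matrix, let i be a fixed index, and let Γ be the matrix obtained from Σ by setting entry Γ_{jk} = 0 whenever j ≠ k and (j = i or k = i), and Γ_{jk} = Σ_{jk} otherwise. If L ≥ 0 is such that v^T Σ v ≤ L‖v‖² for all v ∈ ℝ^m, then v^T Γ v ≤ 2L‖v‖² for all v ∈ ℝ^m. -/

import Mathlib

open Matrix BigOperators

/-- The "intervened" matrix: zero out off-diagonal entries in row `i` and column `i`. -/
def intervene {m : ℕ} (S : Matrix (Fin m) (Fin m) ℝ) (i : Fin m) : Matrix (Fin m) (Fin m) ℝ :=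
  Matrix.of fun j k => if j ≠ k ∧ (j = i ∨ k = i) then 0 else S j k

theorem stmt1 {m : ℕ} (S : Matrix (Fin m) (Fin m) ℝ) (hS : S.PosSemidef) (i : Fin m)
    (L : ℝ) (hL : 0 ≤ L) (hSL : ∀ v : Fin m → ℝ, v ⬝ᵥ S.mulVec v ≤ L * (v ⬝ᵥ v)) :
    ∀ v : Fin m → ℝ, v ⬝ᵥ (intervene S i).mulVec v ≤ 2 * L * (v ⬝ᵥ v) := by
  intro v
  set w : Fin m → ℝ := fun j => if j = i then 0 else v j with hw
  have key : v ⬝ᵥ (intervene S i).mulVec v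
      = w ⬝ᵥ S.mulVec w + S i i * (v i * v i) := by
    have expand : ∀ (M : Matrix (Fin m) (Fin m) ℝ) (u : Fin m → ℝ),
        u ⬝ᵥ M.mulVec u = ∑ j, ∑ k, u j * (M j k * u k) := by
      intro M u
      simp [dotProduct, mulVec, Finset.mul_sum]
    rw [expand, expand]
    have : ∀ j k, v j * (intervene S i j k * v k)
        = w j * (S j k * w k) + (if j = i ∧ k = i then S i i * (v i * v i) else 0) := by
      intro j k
      simp only [intervene, Matrix.of_apply, hw]
      by_cases hj : j = i <;> by_cases hk : k = i
      · simp only [hj, hk, ne_eq, not_true_eq_false, false_and, if_false, if_pos rfl,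
          and_self, if_true]
        ring
      · have h1 : j ≠ k := fun h => hk (h ▸ hj)
        have h2 : i ≠ k := hj ▸ h1
        simp [hj, hk, h1, h2]
      · have h1 : j ≠ k := fun h => hj (h ▸ hk)
        simp [hj, hk, h1]
      · simp [hj, hk]
    simp_rw [this, Finset.sum_add_distrib]
    congr 1
    rw [Finset.sum_comm]  -- harmless
    rw [show (∑ k : Fin m, ∑ j : Fin m, if j = i ∧ k = i then S i i * (v i * v i) else 0)
        = S i i * (v i * v i) from ?_]
    rw [Fintype.sum_eq_single i, Fintype.sum_eq_single i] <;> simp +contextual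
  have hvi : v i * v i ≤ v ⬝ᵥ v := by
    have : ∀ j, (0:ℝ) ≤ v j * v j := fun j => mul_self_nonneg _
    simpa [dotProduct] using Finset.single_le_sum (fun j _ => this j) (Finset.mem_univ i)
  have hww : w ⬝ᵥ w ≤ v ⬝ᵥ v := by
    apply Finset.sum_le_sum
    intro j _
    by_cases hj : j = i <;> simp [hw, hj, mul_self_nonneg]
  have hSii : S i i ≤ L := by
    have := hSL (Pi.single i 1)
    simpa [dotProduct, mulVec, Pi.single_apply, Finset.mul_sum] using this
  have h1 : w ⬝ᵥ S.mulVec w ≤ L * (v ⬝ᵥ v) :=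
    le_trans (hSL w) (by nlinarith [hww])
  have h2 : S i i * (v i * v i) ≤ L * (v ⬝ᵥ v) := by
    have h0 : 0 ≤ v i * v i := mul_self_nonneg _
    have hS0 : 0 ≤ S i i := by simpa using hS.dotProduct_mulVec_nonneg (Pi.single i 1) |>.trans_eq (by
      simp [dotProduct, mulVec, Pi.single_apply, Finset.mul_sum])
    nlinarith
  rw [key]
  nlinarith
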